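/- Let G and K be finite groups and f : G → K a map such that the number of pairs (x,y) ∈ G × G with f(x·y) = f(x)·f(y) is strictly greater than (7/9)·|G|². Then there exists a group homomorphism h : G → K such that the number of x ∈ G with f(x) = h(x) is at least (5/9)·|G|. -/

import Mathlib

open Finset

private lemma card_filter_equiv' {α β : Type*} [Fintype α] [Fintype β] (e : α ≃ β)
    (P : β → Prop) [DecidablePred P] :
    (Finset.univ.filter fun a => P (e a)).card = (Finset.univ.filter P).card := by
  classical
  apply Finset.card_bij' (fun a _ => e a) (fun b _ => e.symm b) <;> simp

set_option maxHeartbeats 1000000 in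
theorem stmt_0 {G K : Type*} [Group G] [Group K] [Finite G] [Finite K]
    (f : G → K)
    (hf : 9 * Nat.card {p : G × G // f (p.1 * p.2) = f p.1 * f p.2} > 7 * (Nat.card G) ^ 2) :
    ∃ h : G →* K, 9 * Nat.card {x : G // f x = h x} ≥ 5 * Nat.card G := by
  classical
  obtain ⟨_⟩ := nonempty_fintype G
  set n := Fintype.card G with hn
  have hn1 : 1 ≤ n := Fintype.card_pos
  set φ : G → G → K := fun x y => f (x * y) * (f y)⁻¹ with hφ
  set c : G → K → ℕ := fun x k => (univ.filter fun y => φ x y = k).card with hc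
  -- good/bad pair counts
  set GP : ℕ := ((univ : Finset (G × G)).filter fun p => f (p.1 * p.2) = f p.1 * f p.2).card
    with hGPdef
  set Bad : ℕ := ((univ : Finset (G × G)).filter fun p => ¬ (f (p.1 * p.2) = f p.1 * f p.2)).card
    with hBaddef
  have hcardGG : (univ : Finset (G × G)).card = n ^ 2 := by
    simp [Finset.card_univ, Fintype.card_prod, sq, hn]
  have hGB : GP + Bad = n ^ 2 := by
    rw [hGPdef, hBaddef, Finset.card_filter_add_card_filter_not, hcardGG]
  have hne : Nat.card G = n := Nat.card_eq_fintype_card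
  have hGPcard : Nat.card {p : G × G // f (p.1 * p.2) = f p.1 * f p.2} = GP := by
    rw [Nat.card_eq_fintype_card, Fintype.card_subtype]
  rw [hGPcard, hne] at hf
  have hBad9 : 9 * Bad + 1 ≤ 2 * n ^ 2 := by omega
  -- each column count is at most n
  have hcle : ∀ x k, c x k ≤ n := by
    intro x k
    exact (Finset.card_filter_le _ _).trans (by simp [hn])
  -- disjointness bound
  have hadd : ∀ (x : G) (k k' : K), k ≠ k' → c x k + c x k' ≤ n := by
    intro x k k' hkk
    have hdisj : Disjoint (univ.filter fun y => φ x y = k) (univ.filter fun y => φ x y = k') := by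
      rw [Finset.disjoint_left]
      intro a ha ha'
      simp only [Finset.mem_filter] at ha ha'
      exact hkk (ha.2 ▸ ha'.2 ▸ rfl)
    calc c x k + c x k'
        = ((univ.filter fun y => φ x y = k) ∪ (univ.filter fun y => φ x y = k')).card := by
          rw [Finset.card_union_of_disjoint hdisj]
      _ ≤ (univ : Finset G).card := Finset.card_le_card (Finset.subset_univ _)
      _ = n := by simp [hn]
  -- majority existence
  have hmaj : ∀ x : G, ∃ k : K, 2 * n < 3 * c x k := by
    intro x
    set S : ℕ := ∑ y : G, c x (φ x y) with hSdef
    -- P and its complement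
    set Pc : Finset (G × G) := (univ : Finset (G × G)).filter
      (fun p => ¬ (φ x p.2 = φ x p.1)) with hPcdef
    have hPcard : ((univ : Finset (G × G)).filter fun p => φ x p.2 = φ x p.1).card = S := by
      rw [hSdef]
      rw [Finset.card_filter, ← Finset.univ_product_univ, Finset.sum_product]
      refine Finset.sum_congr rfl fun y _ => ?_
      simp only [hc, Finset.card_filter]
    have hPPc : S + Pc.card = n ^ 2 := by
      rw [← hPcard, hPcdef, Finset.card_filter_add_card_filter_not, hcardGG]
    -- complement is contained in union of two bad sets
    have hb1 : ((univ : Finset (G × G)).filter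
        (fun p => ¬ (f ((x * p.1) * (p.1⁻¹ * p.2)) = f (x * p.1) * f (p.1⁻¹ * p.2)))).card
        = Bad := by
      have := card_filter_equiv'
        (⟨fun p => (x * p.1, p.1⁻¹ * p.2), fun q => (x⁻¹ * q.1, (x⁻¹ * q.1) * q.2),
          fun p => by simp [mul_assoc], fun q => by simp [mul_assoc]⟩ : (G × G) ≃ (G × G))
        (fun p : G × G => ¬ (f (p.1 * p.2) = f p.1 * f p.2))
      simpa using this
    have hb2 : ((univ : Finset (G × G)).filter
        (fun p => ¬ (f (p.1 * (p.1⁻¹ * p.2)) = f p.1 * f (p.1⁻¹ * p.2)))).card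
        = Bad := by
      have := card_filter_equiv'
        (⟨fun p => (p.1, p.1⁻¹ * p.2), fun q => (q.1, q.1 * q.2),
          fun p => by simp [mul_assoc], fun q => by simp [mul_assoc]⟩ : (G × G) ≃ (G × G))
        (fun p : G × G => ¬ (f (p.1 * p.2) = f p.1 * f p.2))
      simpa using this
    have hPcBad : Pc.card ≤ 2 * Bad := by
      have hsub : Pc ⊆
          ((univ : Finset (G × G)).filter
            (fun p => ¬ (f ((x * p.1) * (p.1⁻¹ * p.2)) = f (x * p.1) * f (p.1⁻¹ * p.2)))) ∪
          ((univ : Finset (G × G)).filter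
            (fun p => ¬ (f (p.1 * (p.1⁻¹ * p.2)) = f p.1 * f (p.1⁻¹ * p.2)))) := by
        intro p hp
        rw [hPcdef, Finset.mem_filter] at hp
        rw [Finset.mem_union, Finset.mem_filter, Finset.mem_filter]
        by_contra hcon
        push_neg at hcon
        obtain ⟨h1, h2⟩ := hcon
        have h1' := h1 (Finset.mem_univ p)
        have h2' := h2 (Finset.mem_univ p)
        apply hp.2
        have hx1 : x * p.1 * (p.1⁻¹ * p.2) = x * p.2 := by group
        have hx2 : p.1 * (p.1⁻¹ * p.2) = p.2 := by group
        rw [hx1] at h1'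
        rw [hx2] at h2'
        rw [hφ]
        simp only
        rw [h1', h2']
        group
      calc Pc.card ≤ _ := Finset.card_le_card hsub
        _ ≤ _ + _ := Finset.card_union_le _ _
        _ = 2 * Bad := by rw [hb1, hb2]; ring
    have hS9 : 5 * n ^ 2 + 2 ≤ 9 * S := by omega
    -- pigeonhole: some value has big count
    have hex : ∃ y : G, S ≤ n * c x (φ x y) := by
      by_contra hno
      push_neg at hno
      have hsum : ∑ y : G, (n * c x (φ x y) + 1) ≤ ∑ _y : G, S :=
        Finset.sum_le_sum fun y _ => hno y
      rw [Finset.sum_add_distrib, ← Finset.mul_sum, ← hSdef] at hsum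
      simp only [Finset.sum_const, Finset.card_univ, smul_eq_mul, ← hn] at hsum
      nlinarith
    obtain ⟨y, hy⟩ := hex
    refine ⟨φ x y, ?_⟩
    set m : ℕ := c x (φ x y) with hm
    have h9m : 5 * n + 1 ≤ 9 * m := by nlinarith
    -- quadratic bound
    set m' : ℕ := (univ.filter fun z => ¬ (φ x z = φ x y)).card with hm'
    have hmm' : m + m' = n := by
      rw [hm, hm', hc]
      rw [Finset.card_filter_add_card_filter_not]
      simp [hn]
    have hD : m' * m ≤ Bad := by
      set D1 : Finset (G × G) := (univ.filter fun z => ¬ (φ x z = φ x y)) ×ˢ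
        (univ.filter fun z => φ x z = φ x y) with hD1
      set D2 : Finset (G × G) := (univ.filter fun z => φ x z = φ x y) ×ˢ
        (univ.filter fun z => ¬ (φ x z = φ x y)) with hD2
      have hD1card : D1.card = m' * m := by rw [hD1, Finset.card_product, hm, hm', hc]
      have hD2card : D2.card = m' * m := by
        rw [hD2, Finset.card_product, hm, hm', hc, Nat.mul_comm]
      have hD1sub : D1 ⊆ Pc := by
        intro p hp
        rw [hD1, Finset.mem_product] at hp
        rw [hPcdef, Finset.mem_filter]
        refine ⟨Finset.mem_univ _, ?_⟩
        have h1 := (Finset.mem_filter.mp hp.1).2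
        have h2 := (Finset.mem_filter.mp hp.2).2
        intro hcon
        exact h1 (hcon ▸ h2)
      have hD2sub : D2 ⊆ Pc := by
        intro p hp
        rw [hD2, Finset.mem_product] at hp
        rw [hPcdef, Finset.mem_filter]
        refine ⟨Finset.mem_univ _, ?_⟩
        have h1 := (Finset.mem_filter.mp hp.1).2
        have h2 := (Finset.mem_filter.mp hp.2).2
        intro hcon
        exact h2 (hcon ▸ h1)
      have hDdisj : Disjoint D1 D2 := by
        rw [Finset.disjoint_left]
        intro p hp1 hp2
        rw [hD1, Finset.mem_product] at hp1
        rw [hD2, Finset.mem_product] at hp2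
        exact (Finset.mem_filter.mp hp1.1).2 (Finset.mem_filter.mp hp2.1).2
      have : D1.card + D2.card ≤ Pc.card := by
        rw [← Finset.card_union_of_disjoint hDdisj]
        exact Finset.card_le_card (Finset.union_subset hD1sub hD2sub)
      omega
    -- conclude 2n < 3m via integer arithmetic
    have hq : 9 * (m' * m) + 1 ≤ 2 * n ^ 2 := by omega
    by_contra hcon
    push_neg at hcon
    have hZ : (0:ℤ) ≤ (3 * (m:ℤ) - n) * (2 * n - 3 * m) := by
      apply mul_nonneg
      · have : (5:ℤ) * n + 1 ≤ 9 * m := by exact_mod_cast h9m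
        linarith
      · have : (3:ℤ) * m ≤ 2 * n := by exact_mod_cast hcon
        linarith
    have hmm'Z : (m:ℤ) + m' = n := by exact_mod_cast hmm'
    have hqZ : 9 * ((m':ℤ) * m) + 1 ≤ 2 * n ^ 2 := by exact_mod_cast hq
    have hsub : (m':ℤ) = n - m := by linarith
    have hexp : (3*(m:ℤ) - n) * (2*n - 3*m) = 9*(((n:ℤ) - m) * m) - 2*n^2 := by ring
    rw [hsub] at hqZ
    linarith [hZ, hqZ, hexp]
  choose h0 hh0 using hmaj
  -- h0 is multiplicative
  have hhom : ∀ x z : G, h0 (x * z) = h0 x * h0 z := by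
    intro x z
    -- set Y1 = {y : φ x (z*y) = h0 x}
    have hY1 : (univ.filter fun y => φ x (z * y) = h0 x).card = c x (h0 x) := by
      exact card_filter_equiv' (Equiv.mulLeft z) (fun w => φ x w = h0 x)
    set Y1 : Finset G := univ.filter fun y => φ x (z * y) = h0 x with hY1def
    set Y2 : Finset G := univ.filter fun y => φ z y = h0 z with hY2def
    have hY2 : Y2.card = c z (h0 z) := rfl
    have hinter : Y1 ∩ Y2 ⊆ univ.filter fun y => φ (x * z) y = h0 x * h0 z := by
      intro y hy
      rw [Finset.mem_inter, hY1def, hY2def, Finset.mem_filter, Finset.mem_filter] at hy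
      obtain ⟨⟨_, h1⟩, ⟨_, h2⟩⟩ := hy
      rw [Finset.mem_filter]
      refine ⟨Finset.mem_univ _, ?_⟩
      rw [hφ] at h1 h2 ⊢
      simp only at h1 h2 ⊢
      rw [← h1, ← h2, mul_assoc x z y]
      group
    have hintercard : n + (Y1 ∩ Y2).card ≥ Y1.card + Y2.card := by
      have := Finset.card_union_add_card_inter Y1 Y2
      have hle : (Y1 ∪ Y2).card ≤ n := by
        calc (Y1 ∪ Y2).card ≤ (univ : Finset G).card := Finset.card_le_card (Finset.subset_univ _)
          _ = n := by simp [hn]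
      omega
    have hc1 : 3 * c (x * z) (h0 x * h0 z) ≥ n + 2 := by
      have h1 := hh0 x
      have h2 := hh0 z
      have hcc : c (x * z) (h0 x * h0 z) ≥ (Y1 ∩ Y2).card := Finset.card_le_card hinter
      rw [hY1, hY2] at hintercard
      omega
    by_contra hne'
    have := hadd (x * z) (h0 (x * z)) (h0 x * h0 z) (fun h => hne' h)
    have h3 := hh0 (x * z)
    omega
  refine ⟨MonoidHom.mk' h0 hhom, ?_⟩
  -- agreement count
  have hHcard : Nat.card {x : G // f x = (MonoidHom.mk' h0 hhom) x}
      = (univ.filter fun x => f x = h0 x).card := by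
    rw [Nat.card_eq_fintype_card, Fintype.card_subtype]
    rfl
  rw [hHcard, hne]
  set A : Finset G := univ.filter fun x => f x = h0 x with hA
  set a : ℕ := A.card with ha
  have han : a + (univ.filter fun x => ¬ (f x = h0 x)).card = n := by
    rw [ha, hA, Finset.card_filter_add_card_filter_not]
    simp [hn]
  -- GP = sum of c x (f x)
  have hpred : ∀ x y : G, (f (x * y) = f x * f y) ↔ (φ x y = f x) := by
    intro x y
    rw [hφ]
    simp only
    rw [mul_inv_eq_iff_eq_mul]
  have hGPsum : GP = ∑ x : G, c x (f x) := by
    rw [hGPdef, Finset.card_filter, ← Finset.univ_product_univ, Finset.sum_product]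
    refine Finset.sum_congr rfl fun x _ => ?_
    simp only [hc, Finset.card_filter]
    exact Finset.sum_congr rfl fun y _ => by simp [hpred]
  -- bound the sum
  have hbound : 3 * GP ≤ 3 * n * a + n * ((univ.filter fun x => ¬ (f x = h0 x)).card) := by
    have hsplit : ∑ x : G, c x (f x)
        = ∑ x ∈ A, c x (f x) + ∑ x ∈ univ.filter (fun x => ¬ (f x = h0 x)), c x (f x) := by
      rw [hA]
      exact (Finset.sum_filter_add_sum_filter_not univ _ _).symm
    have h1 : ∑ x ∈ A, c x (f x) ≤ n * a := by
      calc ∑ x ∈ A, c x (f x) ≤ ∑ _x ∈ A, n := Finset.sum_le_sum fun x _ => hcle x (f x)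
        _ = n * a := by rw [Finset.sum_const, ha, smul_eq_mul, mul_comm]
    have h2 : ∀ x ∈ univ.filter (fun x => ¬ (f x = h0 x)), 3 * c x (f x) ≤ n := by
      intro x hx
      have hxne : f x ≠ h0 x := (Finset.mem_filter.mp hx).2
      have := hadd x (f x) (h0 x) hxne
      have := hh0 x
      omega
    have h2' : ∑ x ∈ univ.filter (fun x => ¬ (f x = h0 x)), 3 * c x (f x)
        ≤ n * ((univ.filter fun x => ¬ (f x = h0 x)).card) := by
      calc _ ≤ ∑ _x ∈ univ.filter (fun x => ¬ (f x = h0 x)), n := Finset.sum_le_sum h2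
        _ = _ := by rw [Finset.sum_const, smul_eq_mul, mul_comm]
    rw [hGPsum, hsplit]
    rw [← Finset.mul_sum] at h2'
    linarith
  set a' : ℕ := (univ.filter fun x => ¬ (f x = h0 x)).card
  -- final arithmetic: 7n² < 9GP ≤ 9na + 3na', a + a' = n
  have h9GP : 9 * GP ≤ 9 * n * a + 3 * (n * a') := by linarith
  nlinarith [hf, h9GP, han, hn1]
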